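/- Let P = (≻₁, …, ≻ₙ) be a profile of linear orders on a finite candidate set C, every vote of which is single-peaked with respect to a fixed linear order ◁ on C. For each voter i let peak(i) be the candidate ranked first by ≻ᵢ. If a candidate c satisfies |{i : peak(i) ◁ c}| ≤ n/2 and |{i : c ◁ peak(i)}| ≤ n/2 (i.e., c is a median of the voters' peaks with respect to ◁), then c is a weak Condorcet winner of P. -/

import Mathlib

/-- A linear order `r` on `C` is single peaked with respect to a linear order `r'`:
letting `p` be the candidate ranked first by `r`, whenever `p ≻' x ≻' y` or
`y ≻' x ≻' p` we have `x ≻ y`. -/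
def SinglePeakedWRT {C : Type*} (r r' : C → C → Prop) : Prop :=
  ∀ p : C, (∀ x : C, x ≠ p → r p x) →
    ∀ x y : C, ((r' p x ∧ r' x y) ∨ (r' y x ∧ r' x p)) → r x y

/-- Median voter theorem: for a profile of linear orders on a finite candidate set, each
single peaked with respect to a common axis `lt`, any candidate `c` that is a median of
the voters' peaks with respect to `lt` is a weak Condorcet winner. -/
theorem median_peak_is_weakCondorcet
    {C : Type*} [Fintype C] [DecidableEq C] {n : ℕ}
    (P : Fin n → C → C → Prop) [∀ i, DecidableRel (P i)]
    (hP : ∀ i, IsStrictTotalOrder C (P i))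
    (lt : C → C → Prop) [DecidableRel lt] (hlt : IsStrictTotalOrder C lt)
    (hsp : ∀ i, SinglePeakedWRT (P i) lt)
    (peak : Fin n → C) (hpeak : ∀ i, ∀ x : C, x ≠ peak i → P i (peak i) x)
    (c : C)
    (hleft : 2 * (Finset.univ.filter fun i => lt (peak i) c).card ≤ n)
    (hright : 2 * (Finset.univ.filter fun i => lt c (peak i)).card ≤ n) :
    ∀ y : C, y ≠ c →
      2 * (Finset.univ.filter fun i => P i y c).card ≤ n := by
  intro y hy
  have asymmP : ∀ i a b, P i a b → P i b a → False := fun i a b h1 h2 =>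
    (hP i).irrefl a ((hP i).trans _ _ _ h1 h2)
  rcases (haveI := hlt; trichotomous (r := lt) c y) with hcy | hcy | hcy
  · refine le_trans (Nat.mul_le_mul_left 2 (Finset.card_le_card ?_)) hright
    intro i hi
    simp only [Finset.mem_filter, Finset.mem_univ, true_and] at hi ⊢
    have hpc : peak i ≠ c := by
      rintro hpc
      exact asymmP i y c hi (hpc ▸ hpeak i y (by simpa [hpc] using hy))
    by_contra h
    rcases (haveI := hlt; trichotomous (r := lt) c (peak i)) with h' | h' | h'
    · exact h h'
    · exact hpc h'.symm
    · exact asymmP i y c hi (hsp i (peak i) (hpeak i) c y (Or.inl ⟨h', hcy⟩))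
  · exact absurd hcy.symm hy
  · refine le_trans (Nat.mul_le_mul_left 2 (Finset.card_le_card ?_)) hleft
    intro i hi
    simp only [Finset.mem_filter, Finset.mem_univ, true_and] at hi ⊢
    have hpc : peak i ≠ c := by
      rintro hpc
      exact asymmP i y c hi (hpc ▸ hpeak i y (by simpa [hpc] using hy))
    by_contra h
    rcases (haveI := hlt; trichotomous (r := lt) (peak i) c) with h' | h' | h'
    · exact h h'
    · exact hpc h'
    · exact asymmP i y c hi (hsp i (peak i) (hpeak i) c y (Or.inr ⟨hcy, h'⟩))
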